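/- Let k ≥ 0 and let i be a power of 2. If G is a hypergraph in class C with maximum degree at most 2d and u is a leaf of T_G such that the full branch ending at u contains i bottom units of power k each, then G can be extended at u (by repeated node splittings) so that in the resulting hypergraph, of maximum degree still at most 2d, every full branch through u contains a bottom unit of power k + log2(i). -/

import Mathlib

/-- The finset of all boolean lists of length `k` (nodes on level `k` of the
complete infinite rooted binary tree). -/
def listsOfLen : ℕ → Finset (List Bool)
  | 0 => {[]}
  | k+1 => (listsOfLen k).image (· ++ [true]) ∪ (listsOfLen k).image (· ++ [false])

/-- The vertex set of the full branch (root-to-`l` path) ending at the node `l`. -/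
def prefixesF (l : List Bool) : Finset (List Bool) :=
  (Finset.range (l.length + 1)).image (fun i => l.take i)

/-- The vertex set of the level-descending path starting at node `p` and
ending at node `p ++ q`. -/
def pathFinset (p q : List Bool) : Finset (List Bool) :=
  (Finset.range (q.length + 1)).image (fun i => p ++ q.take i)

/-- `S` is (the node set of) a rooted binary tree: it contains the root, is
prefix-closed, and every node has either zero or two children. -/
def IsBinTree (S : Finset (List Bool)) : Prop :=
  [] ∈ S ∧ (∀ l ∈ S, ∀ p : List Bool, p <+: l → p ∈ S) ∧
    ∀ l ∈ S, ((l ++ [true]) ∈ S ↔ (l ++ [false]) ∈ S)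

/-- `l` is a leaf of the tree `S`. -/
def IsLeaf (S : Finset (List Bool)) (l : List Bool) : Prop :=
  l ∈ S ∧ (l ++ [true]) ∉ S ∧ (l ++ [false]) ∉ S

/-- The edge `e` is a level-descending path inside the tree `S`. -/
def InTree (S : Finset (List Bool)) (e : Finset (List Bool)) : Prop :=
  ∃ p q : List Bool, (p ++ q) ∈ S ∧ e = pathFinset p q

/-- Degree of vertex `v` in a hypergraph with hyperedge multiset `E`
(counted with multiplicity). -/
def mDegree (E : Multiset (Finset (List Bool))) (v : List Bool) : ℕ :=
  Multiset.countP (fun e => v ∈ e) E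

/-- The number (with multiplicity) of bottom hyperedges of size `L` of the full
branch ending at the leaf `l`: hyperedges contained in the branch and ending at `l`. -/
def bottomCount (E : Multiset (Finset (List Bool))) (l : List Bool) (L : ℕ) : ℕ :=
  Multiset.countP (fun e => l ∈ e ∧ e ⊆ prefixesF l ∧ e.card = L) E

/-- With `d = 2^m`, the full branch ending at leaf `l` contains bottom units of
power `k` whose multiset of lengths is `ls`: a unit of power `k` and length `L`
consists of `2^(m+1+k-L)` hyperedges of size `L` ending at `l`. -/
def HasBottomUnits (m k : ℕ) (E : Multiset (Finset (List Bool))) (l : List Bool)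
    (ls : Multiset ℕ) : Prop :=
  (∀ L ∈ ls, k ≤ L ∧ L ≤ m + 1 + k) ∧
  ∀ L : ℕ, ls.count L * 2 ^ (m + 1 + k - L) ≤ bottomCount E l L

lemma mem_listsOfLen (n : ℕ) (x : List Bool) : x ∈ listsOfLen n ↔ x.length = n := by
  induction n generalizing x with
  | zero => simp [listsOfLen, List.length_eq_zero_iff]
  | succ n ih =>
    simp only [listsOfLen, Finset.mem_union, Finset.mem_image]
    constructor
    · rintro (⟨y, hy, rfl⟩ | ⟨y, hy, rfl⟩) <;> simp [ih y |>.mp hy]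
    · intro hx
      have hne : x ≠ [] := by intro h; simp [h] at hx
      have hx' : x.dropLast ++ [x.getLast hne] = x := List.dropLast_append_getLast hne
      have hlen : x.dropLast.length = n := by
        have : x.dropLast.length = x.length - 1 := List.length_dropLast; omega
      cases hb : x.getLast hne
      · right; exact ⟨x.dropLast, (ih _).mpr hlen, by rw [← hb, hx']⟩
      · left; exact ⟨x.dropLast, (ih _).mpr hlen, by rw [← hb, hx']⟩

lemma card_listsOfLen (n : ℕ) : (listsOfLen n).card = 2 ^ n := by
  induction n with
  | zero => simp [listsOfLen]
  | succ n ih =>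
    have hinj : ∀ b : Bool, Function.Injective (fun l : List Bool => l ++ [b]) := by
      intro b l1 l2 h
      exact (List.append_inj' h rfl).1
    have hdisj : Disjoint ((listsOfLen n).image (· ++ [true]))
        ((listsOfLen n).image (· ++ [false])) := by
      rw [Finset.disjoint_left]
      rintro a ha hb
      simp only [Finset.mem_image] at ha hb
      obtain ⟨y, _, rfl⟩ := ha
      obtain ⟨z, _, hz⟩ := hb
      have := (List.append_inj' hz rfl).2
      simp at this
    rw [listsOfLen, Finset.card_union_of_disjoint hdisj,
      Finset.card_image_of_injective _ (hinj true),
      Finset.card_image_of_injective _ (hinj false), ih]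
    ring

lemma mem_prefixesF (l x : List Bool) : x ∈ prefixesF l ↔ x <+: l := by
  simp only [prefixesF, Finset.mem_image, Finset.mem_range]
  constructor
  · rintro ⟨i, _, rfl⟩; exact List.take_prefix i l
  · intro h
    exact ⟨x.length, by have := h.length_le; omega, (List.prefix_iff_eq_take.mp h).symm⟩

lemma card_prefixesF (l : List Bool) : (prefixesF l).card = l.length + 1 := by
  rw [prefixesF, Finset.card_image_of_injOn, Finset.card_range]
  intro i hi j hj hij
  simp only [Finset.coe_range, Set.mem_Iio] at hi hj
  have := congrArg List.length hij
  simp at this; omega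

lemma mem_pathFinset (p q x : List Bool) : x ∈ pathFinset p q ↔ p <+: x ∧ x <+: p ++ q := by
  simp only [pathFinset, Finset.mem_image, Finset.mem_range]
  constructor
  · rintro ⟨i, _, rfl⟩
    exact ⟨List.prefix_append p _, (List.prefix_append_right_inj p).mpr (List.take_prefix i q)⟩
  · rintro ⟨⟨r, rfl⟩, h2⟩
    have hr : r <+: q := (List.prefix_append_right_inj p).mp h2
    exact ⟨r.length, by have := hr.length_le; omega,
      by rw [← List.prefix_iff_eq_take.mp hr]⟩

lemma card_pathFinset (p q : List Bool) : (pathFinset p q).card = q.length + 1 := by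
  rw [pathFinset, Finset.card_image_of_injOn, Finset.card_range]
  intro i hi j hj hij
  simp only [Finset.coe_range, Set.mem_Iio] at hi hj
  have := congrArg List.length hij
  simp at this; omega

lemma countP_bind {α β : Type*} (s : Multiset α) (f : α → Multiset β) (p : β → Prop)
    [DecidablePred p] :
    Multiset.countP p (s.bind f) = (s.map fun a => Multiset.countP p (f a)).sum := by
  induction s using Multiset.induction with
  | empty => simp
  | cons a s ih => simp [Multiset.bind_cons, Multiset.countP_add, ih]

lemma countP_replicate {α : Type*} (n : ℕ) (a : α) (p : α → Prop) [DecidablePred p] :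
    Multiset.countP p (Multiset.replicate n a) = if p a then n else 0 := by
  induction n with
  | zero => simp
  | succ n ih =>
    rw [Multiset.replicate_succ, Multiset.countP_cons, ih]
    by_cases h : p a <;> simp [h]

lemma countP_split {α : Type*} (E : Multiset α) (P q : α → Prop) [DecidablePred P]
    [DecidablePred q] :
    Multiset.countP P E =
      Multiset.countP (fun e => P e ∧ q e) E + Multiset.countP (fun e => P e ∧ ¬ q e) E := by
  induction E using Multiset.induction with
  | empty => simp
  | cons a s ih =>
    simp only [Multiset.countP_cons, ih]
    by_cases h1 : P a <;> by_cases h2 : q a <;> simp [h1, h2] <;> ring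

lemma countP_sum_le {α : Type*} (E : Multiset α) (D : Finset ℕ) (p : ℕ → α → Prop)
    [∀ L, DecidablePred (p L)] (P : α → Prop) [DecidablePred P]
    (hdisj : ∀ e ∈ E, ∀ L₁ ∈ D, ∀ L₂ ∈ D, p L₁ e → p L₂ e → L₁ = L₂)
    (himp : ∀ e ∈ E, ∀ L ∈ D, p L e → P e) :
    ∑ L ∈ D, Multiset.countP (p L) E ≤ Multiset.countP P E := by
  induction E using Multiset.induction with
  | empty => simp
  | cons a s ih =>
    have ih' := ih (fun e he => hdisj e (Multiset.mem_cons_of_mem he))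
      (fun e he => himp e (Multiset.mem_cons_of_mem he))
    simp only [Multiset.countP_cons]
    rw [Finset.sum_add_distrib]
    have key : (∑ L ∈ D, if p L a then 1 else 0) ≤ if P a then 1 else 0 := by
      by_cases hex : ∃ L ∈ D, p L a
      · obtain ⟨L₀, hL₀, hpa⟩ := hex
        have hPa : P a := himp a (Multiset.mem_cons_self a s) L₀ hL₀ hpa
        simp only [hPa, if_true]
        calc (∑ L ∈ D, if p L a then 1 else 0)
            = (D.filter (fun L => p L a)).card := by
              rw [Finset.card_filter]
          _ ≤ 1 := by
              apply Finset.card_le_one.mpr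
              intro x hx y hy
              simp only [Finset.mem_filter] at hx hy
              exact hdisj a (Multiset.mem_cons_self a s) x hx.1 y hy.1 hx.2 hy.2
      · push_neg at hex
        have : (∑ L ∈ D, if p L a then 1 else 0) = 0 :=
          Finset.sum_eq_zero (fun L hL => by simp [hex L hL])
        rw [this]; exact Nat.zero_le _
    exact Nat.add_le_add ih' key

lemma exists_succ_prefix {u x : List Bool} (h : u <+: x) (hne : u ≠ x) :
    ∃ b : Bool, u ++ [b] <+: x := by
  obtain ⟨w, rfl⟩ := h
  cases w with
  | nil => simp at hne
  | cons a w' => exact ⟨a, by simp⟩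

section Main

variable (m k t : ℕ) (S : Finset (List Bool)) (E : Multiset (Finset (List Bool)))
  (u : List Bool)

theorem merge_units_aux (hS : IsBinTree S) (hE : ∀ e ∈ E, InTree S e)
    (hdeg : ∀ v : List Bool, mDegree E v ≤ 2 * 2 ^ m)
    (hu : IsLeaf S u)
    (ls : Multiset ℕ) (hcard : ls.card = 2 ^ t)
    (hunits : HasBottomUnits m k E u ls) :
    ∃ (S' : Finset (List Bool)) (E' : Multiset (Finset (List Bool))),
      S ⊆ S' ∧ IsBinTree S' ∧ (∀ x ∈ S', x ∈ S ∨ u <+: x) ∧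
      (∀ e ∈ E', InTree S' e) ∧
      (E'.filter (fun e => u ∉ e) = E.filter (fun e => u ∉ e)) ∧
      (∀ v : List Bool, mDegree E' v ≤ 2 * 2 ^ m) ∧
      (∀ l : List Bool, IsLeaf S' l → u <+: l →
        ∃ L : ℕ, HasBottomUnits m (k + t) E' l {L}) := by
  obtain ⟨hbounds, hcnt⟩ := hunits
  simp only [bottomCount] at hcnt
  -- basic bounds on elements of ls
  have hL : ∀ L ∈ ls, 1 ≤ L ∧ L ≤ u.length + 1 := by
    intro L hLm
    have h1 : 1 ≤ ls.count L := (Multiset.one_le_count_iff_mem).mpr hLm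
    have h2 : 1 ≤ ls.count L * 2 ^ (m + 1 + k - L) :=
      Nat.one_le_iff_ne_zero.mpr (by positivity)
    have h3 := lt_of_lt_of_le h2 (hcnt L)
    obtain ⟨e, heE, heu, hesub, hecard⟩ := Multiset.countP_pos.mp h3
    constructor
    · rw [← hecard]
      exact Finset.card_pos.mpr ⟨u, heu⟩
    · rw [← hecard, ← card_prefixesF u]
      exact Finset.card_le_card hesub
  -- the fact that u has no proper extension in S
  have hSu : ∀ x ∈ S, u <+: x → x = u := by
    intro x hx hux
    by_contra hne
    obtain ⟨b, hb⟩ := exists_succ_prefix hux (fun h => hne h.symm)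
    have : u ++ [b] ∈ S := hS.2.1 x hx _ hb
    cases b
    · exact hu.2.2 this
    · exact hu.2.1 this
  -- the new tree
  set S' : Finset (List Bool) :=
    S ∪ (Finset.range (t+1)).biUnion (fun s => (listsOfLen s).image (u ++ ·)) with hS'def
  have mem_S' : ∀ x, x ∈ S' ↔ x ∈ S ∨ (u <+: x ∧ x.length ≤ u.length + t) := by
    intro x
    simp only [hS'def, Finset.mem_union, Finset.mem_biUnion, Finset.mem_range,
      Finset.mem_image]
    constructor
    · rintro (h | ⟨s, hs, w, hw, rfl⟩)
      · exact Or.inl h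
      · refine Or.inr ⟨⟨w, rfl⟩, ?_⟩
        have := (mem_listsOfLen s w).mp hw
        simp; omega
    · rintro (h | ⟨⟨w, rfl⟩, hlen⟩)
      · exact Or.inl h
      · refine Or.inr ⟨w.length, ?_, w, (mem_listsOfLen _ w).mpr rfl, rfl⟩
        simp at hlen; omega
  -- the new edges
  set pe : ℕ → List Bool := fun L => u.take (u.length + 1 - L) with hpe
  set qe : ℕ → List Bool → List Bool := fun L w => u.drop (u.length + 1 - L) ++ w with hqe
  have hpq : ∀ L w, pe L ++ qe L w = u ++ w := by
    intro L w; simp [hpe, hqe, ← List.append_assoc]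
  have hqlen : ∀ L w, 1 ≤ L → L ≤ u.length + 1 → (qe L w).length = L - 1 + w.length := by
    intro L w h1 h2; simp [hqe]; omega
  set edg : ℕ → List Bool → Finset (List Bool) := fun L w => pathFinset (pe L) (qe L w)
    with hedg
  have mem_edg : ∀ L w x, x ∈ edg L w ↔ pe L <+: x ∧ x <+: u ++ w := by
    intro L w x; rw [hedg, mem_pathFinset, hpq]
  have hu_mem_edg : ∀ L w, u ∈ edg L w := by
    intro L w
    rw [mem_edg]
    exact ⟨List.take_prefix _ u, List.prefix_append u w⟩
  have card_edg : ∀ L w, 1 ≤ L → L ≤ u.length + 1 → (edg L w).card = L + w.length := by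
    intro L w h1 h2
    rw [hedg, card_pathFinset, hqlen L w h1 h2]; omega
  set l1 : List ℕ := ls.toList with hl1
  set l2 : List (List Bool) := (listsOfLen t).toList with hl2
  have hl1len : l1.length = 2 ^ t := by rw [hl1, Multiset.length_toList, hcard]
  have hl2len : l2.length = 2 ^ t := by rw [hl2, Finset.length_toList, card_listsOfLen]
  set P : List (ℕ × List Bool) := l1.zip l2 with hP
  have hPmem : ∀ Lw ∈ P, Lw.1 ∈ ls ∧ Lw.2.length = t := by
    rintro ⟨L, w⟩ hLw
    obtain ⟨h1, h2⟩ := List.of_mem_zip hLw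
    exact ⟨by rw [← Multiset.mem_toList]; exact h1,
      (mem_listsOfLen t w).mp (by rw [← Finset.mem_toList]; exact h2)⟩
  set newE : Multiset (Finset (List Bool)) :=
    (↑P : Multiset (ℕ × List Bool)).bind
      (fun Lw => Multiset.replicate (2 ^ (m + 1 + k - Lw.1)) (edg Lw.1 Lw.2)) with hnewE
  have mem_newE : ∀ e ∈ newE, ∃ Lw ∈ P, e = edg Lw.1 Lw.2 := by
    intro e he
    rw [hnewE, Multiset.mem_bind] at he
    obtain ⟨Lw, hLw, he⟩ := he
    exact ⟨Lw, by exact_mod_cast hLw, (Multiset.eq_of_mem_replicate he)⟩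
  set E' : Multiset (Finset (List Bool)) := E.filter (fun e => u ∉ e) + newE with hE'
  -- counting new edges under a predicate
  have hcntnew : ∀ (pr : Finset (List Bool) → Prop) (inst : DecidablePred pr),
      Multiset.countP pr newE =
        ((↑P : Multiset (ℕ × List Bool)).map
          (fun Lw => if pr (edg Lw.1 Lw.2) then 2 ^ (m + 1 + k - Lw.1) else 0)).sum := by
    intro pr inst
    rw [hnewE, countP_bind]
    congr 1
    apply Multiset.map_congr rfl
    intro Lw _
    rw [countP_replicate]
  have hPmap : ∀ g : ℕ → ℕ,
      ((↑P : Multiset (ℕ × List Bool)).map (fun Lw => g Lw.1)).sum = (ls.map g).sum := by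
    intro g
    have h1 : P.map (fun Lw : ℕ × List Bool => g Lw.1) = l1.map g := by
      conv_rhs => rw [← List.map_fst_zip (show l1.length ≤ l2.length by rw [hl1len, hl2len])]
      rw [List.map_map]
      rfl
    rw [Multiset.map_coe, h1, ← Multiset.map_coe, hl1, Multiset.coe_toList]
  have keyA : ∀ (j : ℕ) (v : List Bool), v <+: u → u.length ≤ v.length + j →
      ((ls.map (fun L => if j < L then 2 ^ (m + 1 + k - L) else 0)).sum
        ≤ Multiset.countP (fun e => v ∈ e ∧ u ∈ e) E) := by
    intro j v hv hj
    rw [Finset.sum_multiset_map_count]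
    have step1 : (∑ L ∈ ls.toFinset, ls.count L • (if j < L then 2 ^ (m + 1 + k - L) else 0))
        = ∑ L ∈ ls.toFinset.filter (fun L => j < L), ls.count L * 2 ^ (m + 1 + k - L) := by
      rw [Finset.sum_filter]
      apply Finset.sum_congr rfl
      intro L _
      by_cases h : j < L <;> simp [h]
    rw [step1]
    calc (∑ L ∈ ls.toFinset.filter (fun L => j < L), ls.count L * 2 ^ (m + 1 + k - L))
        ≤ ∑ L ∈ ls.toFinset.filter (fun L => j < L),
            Multiset.countP (fun e => u ∈ e ∧ e ⊆ prefixesF u ∧ e.card = L) E :=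
          Finset.sum_le_sum (fun L _ => hcnt L)
      _ ≤ Multiset.countP (fun e => v ∈ e ∧ u ∈ e) E := by
          apply countP_sum_le
          · intro e _ L1 h1 L2 h2 hp1 hp2
            rw [← hp1.2.2, hp2.2.2]
          · intro e heE L hLD hp
            obtain ⟨heu, hesub, hecard⟩ := hp
            simp only [Finset.mem_filter] at hLD
            obtain ⟨hLls, hjL⟩ := hLD
            obtain ⟨pp, qq, hin, rfl⟩ := hE e heE
            have hself : pp ++ qq ∈ pathFinset pp qq :=
              (mem_pathFinset _ _ _).mpr ⟨List.prefix_append _ _, List.prefix_rfl⟩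
            have h1 : pp ++ qq <+: u := (mem_prefixesF u _).mp (hesub hself)
            have h2 : u <+: pp ++ qq := ((mem_pathFinset _ _ _).mp heu).2
            have hequ : pp ++ qq = u :=
              h1.eq_of_length (le_antisymm h1.length_le h2.length_le)
            have hcard' : qq.length + 1 = L := by rw [← hecard, card_pathFinset]
            have hlensum : pp.length + qq.length = u.length := by
              rw [← hequ]; simp
            refine ⟨?_, heu⟩
            rw [mem_pathFinset]
            have hvlen := hv.length_le
            refine ⟨List.prefix_of_prefix_length_le ?_ hv (by omega), ?_⟩
            · rw [← hequ] at *; exact List.prefix_append pp qq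
            · rw [hequ]; exact hv
  refine ⟨S', E', Finset.subset_union_left, ?_, ?_, ?_, ?_, ?_, ?_⟩
  · -- IsBinTree S'
    refine ⟨Finset.mem_union_left _ hS.1, ?_, ?_⟩
    · intro l hl p hp
      rcases (mem_S' l).mp hl with h | ⟨hul, hlen⟩
      · exact (mem_S' p).mpr (Or.inl (hS.2.1 l h p hp))
      · by_cases hplen : p.length ≤ u.length
        · have hpu : p <+: u := List.prefix_of_prefix_length_le hp hul hplen
          exact (mem_S' p).mpr (Or.inl (hS.2.1 u hu.1 p hpu))
        · have hup : u <+: p :=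
            List.prefix_of_prefix_length_le hul hp (by omega)
          exact (mem_S' p).mpr (Or.inr ⟨hup, le_trans hp.length_le hlen⟩)
    · intro l hl
      have key : ∀ b c : Bool, l ++ [b] ∈ S' → l ++ [c] ∈ S' := by
        intro b c hb
        have fromS : l ++ [b] ∈ S → l ++ [c] ∈ S' := by
          intro hbS
          have hlS : l ∈ S := hS.2.1 _ hbS l (by simp)
          have hiff := hS.2.2 l hlS
          refine (mem_S' _).mpr (Or.inl ?_)
          cases b <;> cases c
          · exact hbS
          · exact hiff.mpr hbS
          · exact hiff.mp hbS
          · exact hbS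
        rcases (mem_S' _).mp hb with h | ⟨hpre, hlen⟩
        · exact fromS h
        · by_cases hc : u.length ≤ l.length
          · have hul : u <+: l :=
              List.prefix_of_prefix_length_le hpre (by simp) hc
            refine (mem_S' _).mpr (Or.inr ⟨hul.trans (by simp), ?_⟩)
            simp at hlen ⊢; omega
          · have hlenu : u.length = l.length + 1 := by
              have := hpre.length_le; simp at this; omega
            have hueq : u = l ++ [b] :=
              List.IsPrefix.eq_of_length hpre (by simp [hlenu])
            exact fromS (by rw [← hueq]; exact hu.1)
      exact ⟨key true false, key false true⟩
  · intro x hx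
    rcases (mem_S' x).mp hx with h | ⟨h, _⟩
    · exact Or.inl h
    · exact Or.inr h
  · intro e he
    rw [hE'] at he
    rcases Multiset.mem_add.mp he with h | h
    · obtain ⟨p, q, hpq', rfl⟩ := hE e (Multiset.mem_of_mem_filter h)
      exact ⟨p, q, Finset.mem_union_left _ hpq', rfl⟩
    · obtain ⟨⟨L, w⟩, hLw, rfl⟩ := mem_newE e h
      obtain ⟨hLls, hwlen⟩ := hPmem _ hLw
      refine ⟨pe L, qe L w, ?_, rfl⟩
      rw [hpq L w]
      exact (mem_S' _).mpr (Or.inr ⟨List.prefix_append u w, by simp [hwlen]⟩)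
  · rw [hE', Multiset.filter_add]
    have h1 : newE.filter (fun e => u ∉ e) = 0 := by
      rw [Multiset.filter_eq_nil]
      intro e he
      obtain ⟨⟨L, w⟩, hLw, rfl⟩ := mem_newE e he
      simp only [Decidable.not_not]
      exact hu_mem_edg L w
    have h2 : (E.filter (fun e => u ∉ e)).filter (fun e => u ∉ e)
        = E.filter (fun e => u ∉ e) := by
      apply Multiset.filter_eq_self.mpr
      intro e he
      exact (Multiset.mem_filter.mp he).2
    rw [h1, h2, add_zero]
  · -- degrees
    intro v
    have hdegsplit : mDegree E' v
        = Multiset.countP (fun e => v ∈ e) (E.filter (fun e => u ∉ e))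
          + Multiset.countP (fun e => v ∈ e) newE := by
      rw [hE', mDegree, Multiset.countP_add]
    have holdeq : Multiset.countP (fun e => v ∈ e) (E.filter (fun e => u ∉ e))
        = Multiset.countP (fun e => v ∈ e ∧ u ∉ e) E := by
      rw [Multiset.countP_eq_card_filter, Multiset.countP_eq_card_filter,
        Multiset.filter_filter]
    have hsplit := countP_split E (fun e => v ∈ e) (fun e => u ∈ e)
    have hdegv := hdeg v
    rw [mDegree] at hdegv
    by_cases hvu : v <+: u
    · -- v on the branch above u (or u itself)
      have hnew : Multiset.countP (fun e => v ∈ e) newE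
          = (ls.map (fun L => if u.length - v.length < L then 2 ^ (m+1+k-L) else 0)).sum := by
        rw [hcntnew _ inferInstance]
        have hcong : ∀ Lw ∈ (↑P : Multiset (ℕ × List Bool)),
            (if v ∈ edg Lw.1 Lw.2 then 2 ^ (m + 1 + k - Lw.1) else 0)
              = (fun Lw : ℕ × List Bool =>
                  if u.length - v.length < Lw.1 then 2 ^ (m+1+k-Lw.1) else 0) Lw := by
          rintro ⟨L, w⟩ hLw
          obtain ⟨hLls, hwlen⟩ := hPmem _ (Multiset.mem_coe.mp hLw)
          obtain ⟨hL1, hL2⟩ := hL L hLls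
          have hmem : v ∈ edg L w ↔ u.length - v.length < L := by
            rw [mem_edg]
            constructor
            · rintro ⟨hpv, _⟩
              have h1 := hpv.length_le
              have h2 : (pe L).length = u.length + 1 - L := by
                rw [hpe]; simp; omega
              have hvle := hvu.length_le
              omega
            · intro hlt
              refine ⟨?_, hvu.trans (List.prefix_append u w)⟩
              apply List.prefix_of_prefix_length_le (List.take_prefix _ u) hvu
              simp
              have hvle := hvu.length_le
              omega
          simp only [hmem]
        rw [Multiset.map_congr rfl hcong]
        exact hPmap (fun L => if u.length - v.length < L then 2 ^ (m+1+k-L) else 0)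
      have h1 := keyA (u.length - v.length) v hvu (by have := hvu.length_le; omega)
      rw [hdegsplit, hnew, holdeq]
      omega
    · by_cases hvext : u <+: v
      · -- v strictly below u
        have hvnotS : v ∉ S := by
          intro hvS
          exact hvu ((hSu v hvS hvext) ▸ List.prefix_rfl)
        have hold : Multiset.countP (fun e => v ∈ e) (E.filter (fun e => u ∉ e)) = 0 := by
          rw [Multiset.countP_eq_zero]
          intro e he hv
          obtain ⟨pp, qq, hin, rfl⟩ := hE e (Multiset.mem_of_mem_filter he)
          exact hvnotS (hS.2.1 _ hin v ((mem_pathFinset _ _ _).mp hv).2)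
        have hnewle : Multiset.countP (fun e => v ∈ e) newE
            ≤ (ls.map (fun L => if 0 < L then 2 ^ (m+1+k-L) else 0)).sum := by
          rw [hcntnew _ inferInstance, ← hPmap]
          apply Multiset.sum_map_le_sum_map
          rintro ⟨L, w⟩ hLw
          obtain ⟨hLls, _⟩ := hPmem _ (Multiset.mem_coe.mp hLw)
          obtain ⟨hL1, _⟩ := hL L hLls
          show (if v ∈ edg L w then 2 ^ (m + 1 + k - L) else 0)
            ≤ if 0 < L then 2 ^ (m + 1 + k - L) else 0
          rw [if_pos (Nat.lt_of_lt_of_le Nat.zero_lt_one hL1)]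
          split <;> simp
        have h1 := keyA 0 u List.prefix_rfl (by omega)
        have hsplit' := countP_split E (fun e => u ∈ e) (fun e => u ∈ e)
        have hdegu := hdeg u
        rw [mDegree] at hdegu
        have h2 : Multiset.countP (fun e => u ∈ e ∧ u ∈ e) E
            ≤ Multiset.countP (fun e => u ∈ e) E := by omega
        rw [hdegsplit, hold]
        omega
      · -- v incomparable with u
        have hnew0 : Multiset.countP (fun e => v ∈ e) newE = 0 := by
          rw [Multiset.countP_eq_zero]
          intro e he hv
          obtain ⟨⟨L, w⟩, hLw, rfl⟩ := mem_newE e he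
          have h2 : v <+: u ++ w := ((mem_edg L w v).mp hv).2
          by_cases hlen : v.length ≤ u.length
          · exact hvu (List.prefix_of_prefix_length_le h2 (List.prefix_append u w) hlen)
          · exact hvext (List.prefix_of_prefix_length_le (List.prefix_append u w) h2 (by omega))
        rw [hdegsplit, hnew0, add_zero]
        exact le_trans (Multiset.countP_le_of_le _ (Multiset.filter_le _ _)) hdegv
  · -- leaves below u
    intro l hleaf hul
    have hllen : l.length ≤ u.length + t := by
      rcases (mem_S' l).mp hleaf.1 with h | ⟨_, h⟩
      · rw [hSu l h hul]; omega
      · exact h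
    have hleq : l.length = u.length + t := by
      by_contra hne
      exact hleaf.2.1 ((mem_S' _).mpr (Or.inr
        ⟨hul.trans (List.prefix_append l [true]), by simp; omega⟩))
    obtain ⟨w, rfl⟩ := hul
    have hwlen : w.length = t := by simp at hleq; omega
    have hwmem : w ∈ l2 := by
      rw [hl2, Finset.mem_toList]
      exact (mem_listsOfLen t w).mpr hwlen
    obtain ⟨i, hi, hw⟩ := List.mem_iff_getElem.mp hwmem
    have hil1 : i < l1.length := by rw [hl1len]; rw [hl2len] at hi; omega
    have hiP : i < P.length := by rw [hP, List.length_zip]; omega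
    set L := l1[i] with hLdef
    have hLls : L ∈ ls := by
      rw [← Multiset.mem_toList, ← hl1]
      exact List.getElem_mem hil1
    have hpair : (L, w) ∈ P := by
      have hPi : P[i] = (L, w) := by
        rw [List.getElem_zip, ← hLdef, hw]
      rw [← hPi]
      exact List.getElem_mem hiP
    obtain ⟨hk1, hk2⟩ := hbounds L hLls
    obtain ⟨h1L, h2L⟩ := hL L hLls
    refine ⟨L + t, ?_, ?_⟩
    · intro L' hL'
      rw [Multiset.mem_singleton] at hL'
      subst hL'
      omega
    · intro L'
      by_cases hLeq : L' = L + t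
      · subst hLeq
        rw [Multiset.count_singleton, if_pos rfl, one_mul]
        have hexp : m + 1 + (k + t) - (L + t) = m + 1 + k - L := by omega
        rw [hexp, bottomCount, hE', Multiset.countP_add]
        have hpred : (u ++ w) ∈ edg L w ∧ edg L w ⊆ prefixesF (u ++ w)
            ∧ (edg L w).card = L + t := by
          refine ⟨?_, ?_, ?_⟩
          · rw [mem_edg]
            exact ⟨(List.take_prefix _ u).trans (List.prefix_append u w), List.prefix_rfl⟩
          · intro x hx
            rw [mem_prefixesF]
            exact ((mem_edg L w x).mp hx).2
          · rw [card_edg L w h1L h2L, hwlen]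
        have hbound : 2 ^ (m+1+k-L) ≤ Multiset.countP
            (fun e => u ++ w ∈ e ∧ e ⊆ prefixesF (u ++ w) ∧ e.card = L + t) newE := by
          rw [hcntnew _ inferInstance]
          apply Multiset.single_le_sum (fun x _ => Nat.zero_le x)
          apply Multiset.mem_map.mpr
          exact ⟨(L, w), Multiset.mem_coe.mpr hpair, by rw [if_pos hpred]⟩
        omega
      · rw [Multiset.count_singleton, if_neg hLeq]
        simp
end Main

/-- If the full branch ending at a leaf `u` contains `2^t` bottom units of power
`k`, then the tree hypergraph can be extended at `u`, keeping maximum degree at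
most `2d`, so that every full branch through `u` contains a bottom unit of power
`k + t = k + log₂ (2^t)`. -/
theorem merge_units (m k t : ℕ) (S : Finset (List Bool))
    (E : Multiset (Finset (List Bool)))
    (hS : IsBinTree S) (hE : ∀ e ∈ E, InTree S e)
    (hdeg : ∀ v : List Bool, mDegree E v ≤ 2 * 2 ^ m)
    (u : List Bool) (hu : IsLeaf S u)
    (ls : Multiset ℕ) (hcard : ls.card = 2 ^ t)
    (hunits : HasBottomUnits m k E u ls) :
    ∃ (S' : Finset (List Bool)) (E' : Multiset (Finset (List Bool))),
      S ⊆ S' ∧ IsBinTree S' ∧ (∀ x ∈ S', x ∈ S ∨ u <+: x) ∧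
      (∀ e ∈ E', InTree S' e) ∧
      (E'.filter (fun e => u ∉ e) = E.filter (fun e => u ∉ e)) ∧
      (∀ v : List Bool, mDegree E' v ≤ 2 * 2 ^ m) ∧
      (∀ l : List Bool, IsLeaf S' l → u <+: l →
        ∃ L : ℕ, HasBottomUnits m (k + t) E' l {L}) :=
  merge_units_aux m k t S E u hS hE hdeg hu ls hcard hunits
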